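/- Let f : ℝ → ℝ be integrable, nonnegative, even, and nonincreasing on [0, ∞). Then for every ξ ≠ 0, |∫_ℝ f(x) cos(ξ x) dx| ≤ 4·f(0)/|ξ|. -/

import Mathlib

open MeasureTheory Real Set Filter Topology

lemma fd_aux (f : ℝ → ℝ)
    (hf : Integrable f (volume : Measure ℝ))
    (hnonneg : ∀ x : ℝ, 0 ≤ f x)
    (hmono : AntitoneOn f (Set.Ici (0 : ℝ)))
    (ξ : ℝ) (hξ : 0 < ξ) :
    |∫ x in Set.Ioi (0:ℝ), f x * Real.cos (ξ * x)| ≤ 2 * f 0 / ξ := by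
  set g : ℝ → ℝ := fun x => f x * Real.cos (ξ * x) with hg_def
  have hg : Integrable g (volume : Measure ℝ) := by
    have : Integrable (fun x => Real.cos (ξ * x) * f x) (volume : Measure ℝ) :=
      hf.bdd_mul (Real.continuous_cos.comp (continuous_const.mul continuous_id)).aestronglyMeasurable
        (c := 1) (ae_of_all _ fun x => by simpa using Real.abs_cos_le_one (ξ * x))
    simpa [hg_def, mul_comm] using this
  set a : ℝ := π / (2 * ξ) with ha_def
  set T : ℝ := π / ξ with hT_def
  have hπ := Real.pi_pos
  have hT : 0 < T := div_pos hπ hξ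
  have ha : 0 < a := div_pos hπ (by linarith)
  have hξa : ξ * a = π / 2 := by rw [ha_def]; field_simp
  have hξT : ξ * T = π := by rw [hT_def]; field_simp
  -- sign of cos on the half-period intervals
  have hcossign : ∀ (n : ℕ) (x : ℝ), a + n*T ≤ x → x ≤ a + (n+1)*T →
      0 ≤ (-1:ℝ)^(n+1) * Real.cos (ξ*x) := by
    intro n x h1 h2
    have hb1 := mul_le_mul_of_nonneg_left h1 hξ.le
    have hb2 := mul_le_mul_of_nonneg_left h2 hξ.le
    have hy1 : -(π/2) ≤ ξ*x - ((n:ℝ)+1)*π := by nlinarith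
    have hy2 : ξ*x - ((n:ℝ)+1)*π ≤ π/2 := by nlinarith
    have hcy : 0 ≤ Real.cos (ξ*x - ((n:ℝ)+1)*π) := Real.cos_nonneg_of_mem_Icc ⟨hy1, hy2⟩
    have hkey := Real.cos_add_nat_mul_pi (ξ*x - ((n:ℝ)+1)*π) (n+1)
    push_cast at hkey
    rw [sub_add_cancel] at hkey
    rw [hkey]
    nlinarith [sq_nonneg ((-1:ℝ)^(n+1)), hcy]
  set c : ℕ → ℝ := fun n => ∫ x in (a+(n:ℝ)*T)..(a+((n:ℝ)+1)*T), g x with hc_def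
  -- pair identity
  have hpair : ∀ n : ℕ, c n + c (n+1) =
      ∫ x in (a+(n:ℝ)*T)..(a+((n:ℝ)+1)*T), (f x - f (x+T)) * Real.cos (ξ*x) := by
    intro n
    have hgT : Integrable (fun x => g (x + T)) (volume : Measure ℝ) := hg.comp_add_right T
    have hshift : c (n+1) = ∫ x in (a+(n:ℝ)*T)..(a+((n:ℝ)+1)*T), g (x + T) := by
      show (∫ x in (a+((n+1:ℕ):ℝ)*T)..(a+(((n+1:ℕ):ℝ)+1)*T), g x) = _
      rw [intervalIntegral.integral_comp_add_right (fun x => g x) T]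
      congr 1 <;> push_cast <;> ring
    have hcn : c n = ∫ x in (a+(n:ℝ)*T)..(a+((n:ℝ)+1)*T), g x := rfl
    rw [hshift, hcn, ← intervalIntegral.integral_add hg.intervalIntegrable hgT.intervalIntegrable]
    apply intervalIntegral.integral_congr
    intro x _
    have hxt : ξ*(x+T) = ξ*x + π := by rw [mul_add, hξT]
    simp only [hg_def]
    rw [hxt, Real.cos_add_pi]
    ring
  -- sign of pairs
  have hpair_sign : ∀ n : ℕ, 0 ≤ (-1:ℝ)^(n+1) * (c n + c (n+1)) := by
    intro n
    rw [hpair n, ← intervalIntegral.integral_const_mul]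
    apply intervalIntegral.integral_nonneg
    · have : (0:ℝ) ≤ T := hT.le
      nlinarith [Nat.cast_nonneg (α := ℝ) n]
    · intro u hu
      have h1 := hcossign n u hu.1 hu.2
      have hu0 : (0:ℝ) ≤ u := by
        have : (0:ℝ) ≤ (n:ℝ)*T := mul_nonneg (Nat.cast_nonneg n) hT.le
        nlinarith [hu.1]
      have h2 : 0 ≤ f u - f (u+T) := sub_nonneg.2 (hmono (Set.mem_Ici.2 hu0)
        (Set.mem_Ici.2 (by linarith)) (by linarith))
      have := mul_nonneg h2 h1
      nlinarith [this]
  -- sign of individual terms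
  have hc_sign : ∀ n : ℕ, 0 ≤ (-1:ℝ)^(n+1) * c n := by
    intro n
    rw [hc_def]
    simp only []
    rw [← intervalIntegral.integral_const_mul]
    apply intervalIntegral.integral_nonneg
    · nlinarith [Nat.cast_nonneg (α := ℝ) n, hT.le]
    · intro u hu
      have h1 := hcossign n u hu.1 hu.2
      have h2 := hnonneg u
      simp only [hg_def]
      nlinarith [mul_nonneg h2 h1]
  -- lower bound on c 0
  have hc0 : -(2 * f 0 / ξ) ≤ c 0 := by
    have hmodel : ∫ x in a..(a+T), f 0 * Real.cos (ξ*x) = -(2 * f 0 / ξ) := by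
      rw [intervalIntegral.integral_const_mul]
      rw [intervalIntegral.integral_comp_mul_left (fun x => Real.cos x) hξ.ne']
      rw [integral_cos]
      rw [show ξ*(a+T) = π/2 + π from by rw [mul_add, hξa, hξT], hξa]
      rw [Real.sin_add_pi, Real.sin_pi_div_two]
      field_simp
      ring_nf; simp [hξ.ne']
    have hle : ∫ x in a..(a+T), f 0 * Real.cos (ξ*x) ≤ ∫ x in a..(a+T), g x := by
      have hcont : Continuous (fun x : ℝ => f 0 * Real.cos (ξ * x)) := by fun_prop
      apply intervalIntegral.integral_mono_on (by linarith) (hcont.intervalIntegrable _ _)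
        hg.intervalIntegrable
      intro u hu
      have hcn : Real.cos (ξ*u) ≤ 0 := by
        have := hcossign 0 u (by simpa using hu.1) (by push_cast; simpa using hu.2)
        simpa using this
      have hfu : f u ≤ f 0 := hmono (Set.mem_Ici.2 le_rfl)
        (Set.mem_Ici.2 (by linarith [hu.1])) (by linarith [hu.1])
      simp only [hg_def]
      nlinarith
    have : c 0 = ∫ x in a..(a+T), g x := by
      rw [hc_def]; simp only []; norm_num
    rw [this, ← hmodel]; exact hle
  -- partial sums
  set S : ℕ → ℝ := fun N => ∑ n ∈ Finset.range N, c n with hS_def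
  have hS : ∀ N : ℕ, S N = ∫ x in a..(a + (N:ℝ)*T), g x := by
    intro N
    have := intervalIntegral.sum_integral_adjacent_intervals
      (a := fun n : ℕ => a + (n:ℝ)*T) (μ := volume) (f := g) (n := N)
      (fun k _ => hg.intervalIntegrable)
    simp only [Nat.cast_succ, Nat.cast_zero, zero_mul, add_zero] at this
    exact this
  -- parity facts
  have hodd_pair : ∀ k : ℕ, 0 ≤ c (2*k+1) + c (2*k+2) := by
    intro k
    have h := hpair_sign (2*k+1)
    rw [Even.neg_one_pow ⟨k+1, by ring⟩, one_mul] at h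
    exact h
  have heven_pair : ∀ k : ℕ, c (2*k) + c (2*k+1) ≤ 0 := by
    intro k
    have h := hpair_sign (2*k)
    rw [Odd.neg_one_pow ⟨k, by ring⟩] at h
    linarith
  have hcodd : ∀ k : ℕ, 0 ≤ c (2*k+1) := by
    intro k
    have h := hc_sign (2*k+1)
    rw [Even.neg_one_pow ⟨k+1, by ring⟩, one_mul] at h
    exact h
  have hc0le : c 0 ≤ 0 := by
    have h := hc_sign 0
    norm_num at h
    linarith
  -- partial sum bounds
  have hSodd_ge : ∀ k : ℕ, c 0 ≤ S (2*k+1) := by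
    intro k
    induction k with
    | zero => simp [hS_def]
    | succ k ih =>
      have hstep : S (2*(k+1)+1) = S (2*k+1) + (c (2*k+1) + c (2*k+2)) := by
        rw [hS_def]
        simp only []
        rw [show 2*(k+1)+1 = (2*k+1)+1+1 from by ring, Finset.sum_range_succ,
          Finset.sum_range_succ]
        ring
      rw [hstep]
      have := hodd_pair k
      linarith
  have hSeven_le : ∀ k : ℕ, S (2*k) ≤ 0 := by
    intro k
    induction k with
    | zero => simp [hS_def]
    | succ k ih =>
      have hstep : S (2*(k+1)) = S (2*k) + (c (2*k) + c (2*k+1)) := by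
        rw [hS_def]
        simp only []
        rw [show 2*(k+1) = (2*k)+1+1 from by ring, Finset.sum_range_succ,
          Finset.sum_range_succ]
        ring
      rw [hstep]
      have := heven_pair k
      linarith
  have hSeven_ge : ∀ k : ℕ, c 0 ≤ S (2*k) := by
    intro k
    cases k with
    | zero => simpa [hS_def] using hc0le
    | succ k =>
      have hstep : S (2*(k+1)) = S (2*k+1) + c (2*k+1) := by
        rw [hS_def]
        simp only []
        rw [show 2*(k+1) = (2*k+1)+1 from by ring, Finset.sum_range_succ]
      rw [hstep]
      have h1 := hSodd_ge k
      have h2 := hcodd k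
      linarith
  -- limit
  have htend : Tendsto (fun N : ℕ => a + (N:ℝ)*T) atTop atTop := by
    apply tendsto_atTop_add_const_left
    exact Tendsto.atTop_mul_const hT tendsto_natCast_atTop_atTop
  have hJ := MeasureTheory.intervalIntegral_tendsto_integral_Ioi a hg.integrableOn htend
  have hJS : Tendsto S atTop (𝓝 (∫ x in Set.Ioi a, g x)) := by
    have hSe : S = fun N : ℕ => ∫ x in a..(a + (N:ℝ)*T), g x := funext hS
    rw [hSe]
    exact hJ
  have h2k : Tendsto (fun k : ℕ => 2*k) atTop atTop :=
    tendsto_atTop_mono (fun k => by simp; omega) tendsto_id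
  have hJS2 := hJS.comp h2k
  have hJle : (∫ x in Set.Ioi a, g x) ≤ 0 :=
    le_of_tendsto hJS2 (Filter.Eventually.of_forall hSeven_le)
  have hJge : c 0 ≤ ∫ x in Set.Ioi a, g x :=
    ge_of_tendsto hJS2 (Filter.Eventually.of_forall hSeven_ge)
  -- head term bounds
  have hPge : 0 ≤ ∫ x in (0:ℝ)..a, g x := by
    apply intervalIntegral.integral_nonneg ha.le
    intro u hu
    have hcos : 0 ≤ Real.cos (ξ*u) := by
      apply Real.cos_nonneg_of_mem_Icc
      constructor
      · nlinarith [mul_nonneg hξ.le hu.1]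
      · nlinarith [mul_le_mul_of_nonneg_left hu.2 hξ.le]
    exact mul_nonneg (hnonneg u) hcos
  have hPle : ∫ x in (0:ℝ)..a, g x ≤ f 0 / ξ := by
    have hcont : Continuous (fun x : ℝ => f 0 * Real.cos (ξ*x)) := by fun_prop
    have hmodel2 : ∫ x in (0:ℝ)..a, f 0 * Real.cos (ξ*x) = f 0 / ξ := by
      rw [intervalIntegral.integral_const_mul,
        intervalIntegral.integral_comp_mul_left (fun x => Real.cos x) hξ.ne', integral_cos]
      rw [mul_zero, hξa]
      simp [Real.sin_pi_div_two]
      field_simp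
    rw [← hmodel2]
    apply intervalIntegral.integral_mono_on ha.le hg.intervalIntegrable
      (hcont.intervalIntegrable _ _)
    intro u hu
    have hcos : 0 ≤ Real.cos (ξ*u) := by
      apply Real.cos_nonneg_of_mem_Icc
      constructor
      · nlinarith [mul_nonneg hξ.le hu.1]
      · nlinarith [mul_le_mul_of_nonneg_left hu.2 hξ.le]
    have hfu : f u ≤ f 0 := hmono (Set.mem_Ici.2 le_rfl) (Set.mem_Ici.2 hu.1) hu.1
    exact mul_le_mul_of_nonneg_right hfu hcos
  -- split and conclude
  have hsplit : (∫ x in Set.Ioi (0:ℝ), g x) =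
      (∫ x in (0:ℝ)..a, g x) + ∫ x in Set.Ioi a, g x := by
    rw [intervalIntegral.integral_of_le ha.le,
      ← MeasureTheory.setIntegral_union (Set.Ioc_disjoint_Ioi le_rfl) measurableSet_Ioi
        hg.integrableOn hg.integrableOn, Set.Ioc_union_Ioi_eq_Ioi ha.le]
  rw [hsplit, abs_le]
  have hf0 : 0 ≤ f 0 / ξ := div_nonneg (hnonneg 0) hξ.le
  have hsum : 2 * f 0 / ξ = f 0 / ξ + f 0 / ξ := by ring
  constructor
  · linarith
  · linarith

theorem fourier_decay_of_monotone (f : ℝ → ℝ)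
    (hf : Integrable f (volume : Measure ℝ))
    (hnonneg : ∀ x : ℝ, 0 ≤ f x)
    (heven : ∀ x : ℝ, f (-x) = f x)
    (hmono : AntitoneOn f (Set.Ici (0 : ℝ)))
    (ξ : ℝ) (hξ : ξ ≠ 0) :
    |∫ x : ℝ, f x * Real.cos (ξ * x)| ≤ 4 * f 0 / |ξ| := by
  have hs : 0 < |ξ| := abs_pos.mpr hξ
  have key := fd_aux f hf hnonneg hmono |ξ| hs
  have heq : (∫ x : ℝ, f x * Real.cos (ξ*x)) =
      2 * ∫ x in Set.Ioi (0:ℝ), f x * Real.cos (|ξ| * x) := by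
    rw [← integral_comp_abs (f := fun x => f x * Real.cos (|ξ| * x))]
    congr 1
    funext x
    have hcx : Real.cos (|ξ| * |x|) = Real.cos (ξ*x) := by
      rcases abs_cases ξ with ⟨h,_⟩|⟨h,_⟩ <;> rcases abs_cases x with ⟨h2,_⟩|⟨h2,_⟩ <;>
        rw [h, h2] <;> simp [Real.cos_neg, neg_mul, mul_neg, neg_neg]
    have hfx : f |x| = f x := by
      rcases abs_cases x with ⟨h2,_⟩|⟨h2,_⟩ <;> rw [h2]
      · exact heven x
    rw [hfx, hcx]
  rw [heq, abs_mul, abs_two]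
  have h4 : 2 * (2 * f 0 / |ξ|) = 4 * f 0 / |ξ| := by ring
  linarith
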